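/- Let F : I → ℝ be twice differentiable on an open interval I containing [a,b] with a < b, and suppose F'' is integrable on [a,b]. Then (F'(a)+F'(b))/2 − (1/(b-a))·∫ₐᵇ F'(x) dx = ((b-a)/2)·∫₀¹ (1−2t)·F''(t·a+(1−t)·b) dt. -/

import Mathlib

open Set intervalIntegral

theorem trapezoid_identity_deriv (F F' F'' : ℝ → ℝ) (I : Set ℝ) (a b : ℝ)
    (hI : IsOpen I) (hab : a < b) (hsub : Icc a b ⊆ I)
    (hF' : ∀ x ∈ I, HasDerivAt F (F' x) x)
    (hF'' : ∀ x ∈ I, HasDerivAt F' (F'' x) x)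
    (hint : IntervalIntegrable F'' MeasureTheory.volume a b) :
    (F' a + F' b) / 2 - (1 / (b - a)) * ∫ x in a..b, F' x =
      ((b - a) / 2) * ∫ t in (0:ℝ)..1, (1 - 2 * t) * F'' (t * a + (1 - t) * b) := by
  have hba : b - a ≠ 0 := sub_ne_zero.mpr hab.ne'
  have hab' : a - b ≠ 0 := sub_ne_zero.mpr hab.ne
  have hmem : ∀ x ∈ uIcc a b, x ∈ I := by
    intro x hx
    exact hsub (by rwa [uIcc_of_le hab.le] at hx)
  set g : ℝ → ℝ := fun x => ((a + b - 2 * x) * F'' x) / (a - b) with hg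
  have h1 : (∫ t in (0:ℝ)..1, (1 - 2 * t) * F'' (t * a + (1 - t) * b))
      = ∫ t in (0:ℝ)..1, g ((a - b) * t + b) := by
    apply intervalIntegral.integral_congr
    intro t _
    have h2 : (a - b) * t + b = t * a + (1 - t) * b := by ring
    simp only [hg, h2]
    field_simp
    ring
  have h3 : (∫ t in (0:ℝ)..1, g ((a - b) * t + b))
      = (a - b)⁻¹ • ∫ x in ((a-b)*0+b)..((a-b)*1+b), g x :=
    intervalIntegral.integral_comp_mul_add g hab' b
  have hcont : ContinuousOn (fun x : ℝ => a + b - 2 * x) (uIcc a b) := by fun_prop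
  have hmul : IntervalIntegrable (fun x => (a + b - 2 * x) * F'' x) MeasureTheory.volume a b :=
    hint.continuousOn_mul hcont
  have hF'cont : ContinuousOn F' (uIcc a b) := fun x hx =>
    ((hF'' x (hmem x hx)).continuousAt).continuousWithinAt
  have hF'int : IntervalIntegrable F' MeasureTheory.volume a b :=
    hF'cont.intervalIntegrable
  have key : (∫ x in a..b, (a + b - 2*x) * F'' x)
      = (a + b - 2*b) * F' b - (a + b - 2*a) * F' a - ∫ x in a..b, (-2:ℝ) * F' x := by
    apply intervalIntegral.integral_mul_deriv_eq_deriv_mul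
      (u := fun x => a + b - 2*x) (u' := fun _ => (-2:ℝ)) (v := F') (v' := F'')
    · intro x hx
      simpa using ((hasDerivAt_id x).const_mul 2).const_sub (a+b)
    · intro x hx
      exact hF'' x (hmem x hx)
    · exact intervalIntegrable_const
    · exact hint
  have hconst : (∫ x in a..b, (-2:ℝ) * F' x) = -2 * ∫ x in a..b, F' x :=
    intervalIntegral.integral_const_mul _ _
  have hdiv : (∫ x in b..a, g x) = (∫ x in b..a, (a + b - 2 * x) * F'' x) / (a - b) :=
    intervalIntegral.integral_div _ _
  have hsymm : (∫ x in b..a, (a + b - 2 * x) * F'' x)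
      = -∫ x in a..b, (a + b - 2 * x) * F'' x := intervalIntegral.integral_symm a b
  have hb0 : (a-b)*0+b = b := by ring
  have hb1 : (a-b)*1+b = a := by ring
  rw [h1, h3, hb0, hb1, hdiv, hsymm, key, hconst]
  rw [smul_eq_mul]
  field_simp
  ring
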